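/- Let ε ∈ (0,1), β ∈ (0,1), and let X₁, …, X_N be independent identically distributed real-valued random variables with common law μ, where N ≥ (1+√3)²·ln(1/β)/ε. Set r := ⌈εN/2⌉ and let X_{(r)} denote the r-th smallest value among X₁, …, X_N. Then the probability of the event {μ({x ∈ ℝ : x < X_{(r)}}) > ε} is at most β. -/

import Mathlib

open MeasureTheory

/-- The `r`-th smallest value among `X 1, …, X N`: the smallest `x` such that at least
`r` of the values are `≤ x`. -/
noncomputable def orderStat {N : ℕ} (X : Fin N → ℝ) (r : ℕ) : ℝ :=
  sInf {x : ℝ | r ≤ (Finset.univ.filter fun i => X i ≤ x).card}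

open scoped ENNReal in
lemma log_two_le : Real.log 2 ≤ Real.sqrt 3 - 1 := by
  have h1 : Real.log 2 < 0.6931471808 := Real.log_two_lt_d9
  have h2 : (1.7 : ℝ) ≤ Real.sqrt 3 := by
    nlinarith [Real.sq_sqrt (by norm_num : (0:ℝ) ≤ 3), Real.sqrt_nonneg 3]
  linarith

lemma quantile_exists (μ : Measure ℝ) [IsProbabilityMeasure μ] {ε : ℝ}
    (hε0 : 0 < ε) (hε1 : ε < 1) :
    ∃ t : ℝ, ENNReal.ofReal ε ≤ μ (Set.Iic t) ∧ μ (Set.Iio t) ≤ ENNReal.ofReal ε := by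
  set S : Set ℝ := {x : ℝ | ENNReal.ofReal ε ≤ μ (Set.Iic x)} with hS
  have hεlt1 : ENNReal.ofReal ε < 1 := by
    rw [← ENNReal.ofReal_one]
    exact (ENNReal.ofReal_lt_ofReal_iff one_pos).mpr hε1
  have hne : S.Nonempty := by
    have h := (tendsto_measure_Iic_atTop μ).eventually (eventually_gt_nhds
      (show ENNReal.ofReal ε < μ Set.univ by rw [measure_univ]; exact hεlt1))
    obtain ⟨x, hx⟩ := h.exists
    exact ⟨x, le_of_lt hx⟩
  have hεpos : (0:ENNReal) < ENNReal.ofReal ε := ENNReal.ofReal_pos.mpr hε0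
  have hbdd : BddBelow S := by
    have htend : Filter.Tendsto (μ ∘ fun n : ℕ => Set.Iic (-(n:ℝ))) Filter.atTop
        (nhds (μ (⋂ n : ℕ, Set.Iic (-(n:ℝ))))) := by
      refine tendsto_measure_iInter_atTop (fun n => measurableSet_Iic.nullMeasurableSet)
        (fun n m hnm => Set.Iic_subset_Iic.mpr
          (neg_le_neg (Nat.cast_le.mpr hnm))) ⟨0, measure_ne_top _ _⟩
    have hempty : (⋂ n : ℕ, Set.Iic (-(n:ℝ))) = ∅ := by
      ext x
      simp only [Set.mem_iInter, Set.mem_Iic, Set.mem_empty_iff_false, iff_false, not_forall,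
        not_le]
      obtain ⟨n, hn⟩ := exists_nat_gt (-x)
      exact ⟨n, by linarith⟩
    rw [hempty, measure_empty] at htend
    have h := htend.eventually (eventually_lt_nhds hεpos)
    obtain ⟨n, hn⟩ := h.exists
    refine ⟨-(n:ℝ), fun x hx => ?_⟩
    by_contra hxb
    push_neg at hxb
    have : μ (Set.Iic x) ≤ μ (Set.Iic (-(n:ℝ))) := measure_mono (Set.Iic_subset_Iic.mpr hxb.le)
    exact absurd (hx.trans this) (not_le.mpr hn)
  set t := sInf S with ht
  refine ⟨t, ?_, ?_⟩
  · -- upper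
    have hIic : Set.Iic t = ⋂ n : ℕ, Set.Iic (t + 1/(n+1)) := by
      ext x
      simp only [Set.mem_Iic, Set.mem_iInter]
      constructor
      · intro h n
        have : (0:ℝ) < 1/(n+1) := by positivity
        linarith
      · intro h
        by_contra hx
        push_neg at hx
        obtain ⟨n, hn⟩ := exists_nat_one_div_lt (by linarith : (0:ℝ) < x - t)
        exact absurd (h n) (not_le.mpr (by linarith))
    have htend : Filter.Tendsto (μ ∘ fun n : ℕ => Set.Iic (t + 1/(n+1))) Filter.atTop
        (nhds (μ (Set.Iic t))) := by
      rw [hIic]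
      refine tendsto_measure_iInter_atTop (fun n => measurableSet_Iic.nullMeasurableSet)
        (fun n m hnm => Set.Iic_subset_Iic.mpr ?_) ⟨0, measure_ne_top _ _⟩
      have hc : (n:ℝ) ≤ (m:ℝ) := Nat.cast_le.mpr hnm
      have : (1:ℝ)/(m+1) ≤ 1/(n+1) := by
        apply one_div_le_one_div_of_le (by positivity)
        linarith
      linarith
    refine ge_of_tendsto' htend fun n => ?_
    have hlt : t < t + 1/(n+1) := by
      have : (0:ℝ) < 1/(n+1) := by positivity
      linarith
    obtain ⟨x, hxS, hxlt⟩ := exists_lt_of_csInf_lt hne hlt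
    exact le_trans hxS (measure_mono (Set.Iic_subset_Iic.mpr hxlt.le))
  · -- lower
    have hIio : Set.Iio t = ⋃ n : ℕ, Set.Iic (t - 1/(n+1)) := by
      ext x
      simp only [Set.mem_Iio, Set.mem_iUnion, Set.mem_Iic]
      constructor
      · intro h
        obtain ⟨n, hn⟩ := exists_nat_one_div_lt (by linarith : (0:ℝ) < t - x)
        exact ⟨n, by linarith⟩
      · rintro ⟨n, hn⟩
        have : (0:ℝ) < 1/(n+1) := by positivity
        linarith
    have htend : Filter.Tendsto (μ ∘ fun n : ℕ => Set.Iic (t - 1/(n+1))) Filter.atTop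
        (nhds (μ (Set.Iio t))) := by
      rw [hIio]
      refine tendsto_measure_iUnion_atTop (fun n m hnm => Set.Iic_subset_Iic.mpr ?_)
      have hc : (n:ℝ) ≤ (m:ℝ) := Nat.cast_le.mpr hnm
      have : (1:ℝ)/(m+1) ≤ 1/(n+1) := by
        apply one_div_le_one_div_of_le (by positivity)
        linarith
      linarith
    refine le_of_tendsto' htend fun n => ?_
    by_contra hgt
    push_neg at hgt
    have hmem : (t - 1/(n+1)) ∈ S := le_of_lt hgt
    have : t ≤ t - 1/(n+1) := csInf_le hbdd hmem
    have hpos : (0:ℝ) < 1/(n+1) := by positivity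
    linarith

/-- Order-statistic form of Proposition 1: for `N ≥ (1+√3)² ln(1/β)/ε`
i.i.d. real random variables with common law `μ`, the probability that the law puts
mass more than `ε` strictly below the `⌈εN/2⌉`-th smallest sample is at most `β`. -/
theorem stmt6 {Ω : Type*} [MeasurableSpace Ω] (P : Measure Ω) [IsProbabilityMeasure P]
    (μ : Measure ℝ) [IsProbabilityMeasure μ]
    (ε β : ℝ) (hε : ε ∈ Set.Ioo (0 : ℝ) 1) (hβ : β ∈ Set.Ioo (0 : ℝ) 1)
    (N : ℕ) (hN : (1 + Real.sqrt 3) ^ 2 * Real.log (1 / β) / ε ≤ (N : ℝ))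
    (X : Fin N → Ω → ℝ) (hXmeas : ∀ i, Measurable (X i))
    (hXindep : ProbabilityTheory.iIndepFun X P)
    (hXlaw : ∀ i, P.map (X i) = μ) :
    P {ω | μ {x : ℝ | x < orderStat (fun i => X i ω) ⌈ε * (N : ℝ) / 2⌉₊} >
        ENNReal.ofReal ε} ≤ ENNReal.ofReal β := by
  obtain ⟨hε0, hε1⟩ := hε
  obtain ⟨hβ0, hβ1⟩ := hβ
  have hL : 0 < Real.log (1/β) := Real.log_pos (one_lt_one_div hβ0 hβ1)
  have hs3 : (0:ℝ) ≤ Real.sqrt 3 := Real.sqrt_nonneg 3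
  have hεN : (1 + Real.sqrt 3)^2 * Real.log (1/β) ≤ ε * N := by
    rw [div_le_iff₀ hε0] at hN; linarith
  have hεNpos : (0:ℝ) < ε * N := lt_of_lt_of_le (by positivity) hεN
  have hN0 : 0 < N := by
    have hNr : (0:ℝ) < (N:ℝ) := by nlinarith
    exact_mod_cast hNr
  haveI : Nonempty (Fin N) := ⟨⟨0, hN0⟩⟩
  have hr1 : 1 ≤ ⌈ε * (N:ℝ) / 2⌉₊ := Nat.ceil_pos.mpr (by linarith)
  obtain ⟨t, htup, htlow⟩ := quantile_exists μ hε0 hε1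
  set Y : Fin N → Ω → ℝ := fun i ω => if X i ω ≤ t then 1 else 0 with hY
  set r := ⌈ε * (N:ℝ) / 2⌉₊ with hr
  -- Step 1: event inclusion
  have hsub : {ω | μ {x : ℝ | x < orderStat (fun i => X i ω) r} > ENNReal.ofReal ε}
      ⊆ {ω | (∑ i ∈ Finset.univ, Y i) ω ≤ ε * N / 2} := by
    intro ω hω
    simp only [Set.mem_setOf_eq] at hω ⊢
    have hσt : t < orderStat (fun i => X i ω) r := by
      by_contra hle
      push_neg at hle
      have hmono : μ {x : ℝ | x < orderStat (fun i => X i ω) r} ≤ μ (Set.Iio t) :=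
        measure_mono (fun x hx => lt_of_lt_of_le hx hle)
      exact absurd (hmono.trans htlow) (not_le.mpr hω)
    have hcount : (Finset.univ.filter fun i => X i ω ≤ t).card < r := by
      by_contra hge
      push_neg at hge
      have hmem : t ∈ {x : ℝ | r ≤ (Finset.univ.filter fun i => (fun j => X j ω) i ≤ x).card} := by
        simpa using hge
      have hbdd : BddBelow {x : ℝ | r ≤ (Finset.univ.filter fun i => (fun j => X j ω) i ≤ x).card} := by
        refine ⟨Finset.univ.inf' Finset.univ_nonempty (fun i => X i ω), fun x hx => ?_⟩
        have hpos : 0 < (Finset.univ.filter fun i => (fun j => X j ω) i ≤ x).card :=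
          lt_of_lt_of_le hr1 hx
        obtain ⟨i, hi⟩ := Finset.card_pos.mp hpos
        obtain ⟨_, hix⟩ := Finset.mem_filter.mp hi
        exact le_trans (Finset.inf'_le _ (Finset.mem_univ i)) hix
      have : orderStat (fun i => X i ω) r ≤ t := csInf_le hbdd hmem
      exact absurd this (not_le.mpr hσt)
    have hsum : (∑ i ∈ Finset.univ, Y i) ω
        = ((Finset.univ.filter fun i => X i ω ≤ t).card : ℝ) := by
      simp only [Finset.sum_apply, hY, Finset.sum_boole]
    rw [hsum]
    exact le_of_lt (Nat.lt_ceil.mp hcount)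
  -- measurability and independence of the indicators
  have hYmeas : ∀ i, Measurable (Y i) := fun i =>
    Measurable.ite (measurableSet_le (hXmeas i) measurable_const) measurable_const
      measurable_const
  have hYindep : ProbabilityTheory.iIndepFun Y P :=
    hXindep.comp (fun _ (x:ℝ) => if x ≤ t then (1:ℝ) else 0)
      (fun _ => Measurable.ite measurableSet_Iic measurable_const measurable_const)
  set s : ℝ := -Real.log 2 with hsdef
  have hsneg : s ≤ 0 := neg_nonpos.mpr (Real.log_nonneg one_le_two)
  have hexps : Real.exp s = 1/2 := by
    rw [hsdef, Real.exp_neg, Real.exp_log two_pos]; norm_num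
  -- mgf of each indicator
  have hmgf_eq : ∀ i, ProbabilityTheory.mgf (Y i) P s = 1 - (μ (Set.Iic t)).toReal / 2 := by
    intro i
    have hpre : P ((X i) ⁻¹' Set.Iic t) = μ (Set.Iic t) := by
      rw [← hXlaw i, Measure.map_apply (hXmeas i) measurableSet_Iic]
    rw [ProbabilityTheory.mgf]
    have heq : (fun ω => Real.exp (s * Y i ω)) =
        fun ω => Set.indicator ((X i) ⁻¹' Set.Iic t) (fun _ => (1:ℝ)/2 - 1) ω + 1 := by
      funext ω
      by_cases h : X i ω ≤ t
      · have hm : ω ∈ (X i) ⁻¹' Set.Iic t := h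
        simp [hY, h, Set.indicator_of_mem hm, hexps]
      · have hm : ω ∉ (X i) ⁻¹' Set.Iic t := h
        simp [hY, h, Set.indicator_of_notMem hm]
    rw [heq, integral_add ((integrable_const _).indicator ((hXmeas i) measurableSet_Iic))
      (integrable_const 1), integral_indicator_const _ ((hXmeas i) measurableSet_Iic),
      integral_const, measureReal_def, measureReal_def, hpre]
    simp only [measure_univ, ENNReal.toReal_one, smul_eq_mul, one_mul, mul_one]
    ring
  have hεp : ε ≤ (μ (Set.Iic t)).toReal :=
    (ENNReal.ofReal_le_iff_le_toReal (measure_ne_top μ _)).mp htup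
  have hp1 : (μ (Set.Iic t)).toReal ≤ 1 := by
    refine ENNReal.toReal_le_of_le_ofReal zero_le_one ?_
    rw [ENNReal.ofReal_one]
    exact prob_le_one
  have hmgf_le : ∀ i, ProbabilityTheory.mgf (Y i) P s ≤ Real.exp (-(ε/2)) := by
    intro i
    rw [hmgf_eq i]
    have h1 : 1 - (μ (Set.Iic t)).toReal / 2 ≤ 1 - ε/2 := by linarith
    refine h1.trans ?_
    linarith [Real.add_one_le_exp (-(ε/2))]
  have hmgf_nonneg : ∀ i, 0 ≤ ProbabilityTheory.mgf (Y i) P s := by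
    intro i
    rw [hmgf_eq i]
    linarith
  -- integrability for Chernoff
  have hSmeas : Measurable ((∑ i ∈ Finset.univ, Y i) : Ω → ℝ) := by
    have heq : ((∑ i ∈ Finset.univ, Y i) : Ω → ℝ) = fun a => ∑ i ∈ Finset.univ, Y i a := by
      funext a; simp [Finset.sum_apply]
    rw [heq]
    exact Finset.measurable_sum _ (fun i _ => hYmeas i)
  have hSnonneg : ∀ ω, 0 ≤ (∑ i ∈ Finset.univ, Y i) ω := by
    intro ω
    simp only [Finset.sum_apply]
    refine Finset.sum_nonneg fun i _ => ?_
    simp only [hY]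
    positivity
  have hint : Integrable (fun ω => Real.exp (s * (∑ i ∈ Finset.univ, Y i) ω)) P := by
    refine (integrable_const (1:ℝ)).mono' ((hSmeas.const_mul s).exp.aestronglyMeasurable) ?_
    refine Filter.Eventually.of_forall fun ω => ?_
    rw [Real.norm_eq_abs, abs_of_nonneg (Real.exp_nonneg _)]
    exact Real.exp_le_one_iff.mpr (mul_nonpos_of_nonpos_of_nonneg hsneg (hSnonneg ω))
  have hcher := ProbabilityTheory.measure_le_le_exp_mul_mgf (μ := P)
    (X := ∑ i ∈ Finset.univ, Y i) (ε * N / 2) hsneg hint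
  rw [hYindep.mgf_sum hYmeas Finset.univ] at hcher
  have hprod : (∏ i ∈ Finset.univ, ProbabilityTheory.mgf (Y i) P s)
      ≤ Real.exp (-(ε/2)) ^ N := by
    calc (∏ i ∈ Finset.univ, ProbabilityTheory.mgf (Y i) P s)
        ≤ ∏ _i ∈ (Finset.univ : Finset (Fin N)), Real.exp (-(ε/2)) :=
          Finset.prod_le_prod (fun i _ => hmgf_nonneg i) (fun i _ => hmgf_le i)
      _ = Real.exp (-(ε/2)) ^ N := by
          rw [Finset.prod_const, Finset.card_univ, Fintype.card_fin]
  have hfinal : Real.exp (-s * (ε * N / 2)) * Real.exp (-(ε/2)) ^ N ≤ β := by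
    rw [← Real.exp_nat_mul, ← Real.exp_add]
    have hlogβ : Real.log β = - Real.log (1/β) := by
      rw [one_div, Real.log_inv]; ring
    have hkey : 2 ≤ (1 - Real.log 2) * (1 + Real.sqrt 3)^2 := by
      nlinarith [log_two_le, Real.sq_sqrt (show (0:ℝ) ≤ 3 by norm_num)]
    have hlog2lt : Real.log 2 < 1 := by
      have := Real.log_two_lt_d9; linarith
    have h2 : Real.log (1/β) ≤ (1 - Real.log 2) * (ε * N / 2) := by
      have hmul := mul_le_mul_of_nonneg_left hεN (by linarith : (0:ℝ) ≤ 1 - Real.log 2)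
      nlinarith
    have hA : -s * (ε * N / 2) + (N:ℝ) * (-(ε/2)) ≤ Real.log β := by
      rw [hlogβ, hsdef]
      nlinarith
    calc Real.exp (-s * (ε * N / 2) + (N:ℝ) * (-(ε/2)))
        ≤ Real.exp (Real.log β) := Real.exp_le_exp.mpr hA
      _ = β := Real.exp_log hβ0
  have hreal : (P {ω | (∑ i ∈ Finset.univ, Y i) ω ≤ ε * N / 2}).toReal ≤ β :=
    hcher.trans ((mul_le_mul_of_nonneg_left hprod (Real.exp_nonneg _)).trans hfinal)
  calc P {ω | μ {x : ℝ | x < orderStat (fun i => X i ω) r} > ENNReal.ofReal ε}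
      ≤ P {ω | (∑ i ∈ Finset.univ, Y i) ω ≤ ε * N / 2} := measure_mono hsub
    _ = ENNReal.ofReal ((P {ω | (∑ i ∈ Finset.univ, Y i) ω ≤ ε * N / 2}).toReal) :=
        (ENNReal.ofReal_toReal (measure_ne_top P _)).symm
    _ ≤ ENNReal.ofReal β := ENNReal.ofReal_le_ofReal hreal
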